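/- Every solution x : [t₀, ∞) → ℝⁿ of the masked average-consensus system with x(t₀) = x₀ converges to the average-consensus point of the unmasked problem: lim_{t→∞} x(t) = η𝟙, where η = 𝟙ᵀx₀/n. In other words, the point η𝟙 is a global attractor for the masked system on the affine subspace {x : 𝟙ᵀx = 𝟙ᵀx₀}, even though the masked system has no equilibrium points in general. -/

import Mathlib

open Set Filter Topology Matrix

/-- Right-hand side of the masked average-consensus system
`ẋ = -L (I + Φ e^{-Σ t}) (x + e^{-Δ t} γ)`, written componentwise through the
diagonal matrices `Φ = diag φ`, `Σ = diag σ`, `Δ = diag δ`. -/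
noncomputable def maskedConsensusRHS {n : ℕ} (L : Matrix (Fin n) (Fin n) ℝ)
    (φ σ δ γ : Fin n → ℝ) (t : ℝ) (x : Fin n → ℝ) : Fin n → ℝ :=
  -(L.mulVec (fun i => (1 + φ i * Real.exp (-σ i * t)) * (x i + Real.exp (-δ i * t) * γ i)))

set_option maxHeartbeats 4000000

lemma mc_spectral_gap (n : ℕ) (hn : 2 ≤ n) (L : Matrix (Fin n) (Fin n) ℝ)
    (hLpos : ∀ w : Fin n → ℝ, w ≠ 0 → (∑ i, w i) = 0 →
      0 < dotProduct w ((L + L.transpose).mulVec w)) :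
    ∃ lam > 0, ∀ w : Fin n → ℝ, (∑ i, w i) = 0 →
      lam * (∑ i, w i ^ 2) ≤ dotProduct w ((L + L.transpose).mulVec w) := by
  set M := L + L.transpose with hM
  set Q : (Fin n → ℝ) → ℝ := fun w => dotProduct w (M.mulVec w) with hQ
  have hQc : Continuous Q := by
    have : Q = fun w => ∑ i, w i * ∑ j, M i j * w j := by
      funext w; simp [hQ, dotProduct, Matrix.mulVec]
    rw [this]
    exact continuous_finset_sum _ fun i _ => (continuous_apply i).mul
      (continuous_finset_sum _ fun j _ => continuous_const.mul (continuous_apply j))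
  set S : Set (Fin n → ℝ) := {w | (∑ i, w i ^ 2) = 1 ∧ (∑ i, w i) = 0} with hS
  have hclosed : IsClosed S := by
    apply IsClosed.inter
    · exact isClosed_eq (continuous_finset_sum _ fun i _ => (continuous_apply i).pow 2)
        continuous_const
    · exact isClosed_eq (continuous_finset_sum _ fun i _ => continuous_apply i)
        continuous_const
  have hsub : S ⊆ Metric.closedBall 0 1 := by
    intro w hw
    rw [Metric.mem_closedBall, dist_zero_right]
    apply pi_norm_le_iff_of_nonneg zero_le_one |>.2
    intro i
    have h1 : w i ^ 2 ≤ 1 := by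
      rw [← hw.1]
      exact Finset.single_le_sum (fun j _ => sq_nonneg (w j)) (Finset.mem_univ i)
    rw [Real.norm_eq_abs]
    nlinarith [abs_nonneg (w i), sq_abs (w i)]
  have hcpt : IsCompact S := Metric.isCompact_of_isClosed_isBounded hclosed
    (Metric.isBounded_closedBall.subset hsub)
  -- nonempty
  have h0n : (0 : ℕ) < n := by omega
  have h1n : (1 : ℕ) < n := by omega
  set i0 : Fin n := ⟨0, h0n⟩
  set i1 : Fin n := ⟨1, h1n⟩
  have hi01 : i0 ≠ i1 := by simp [i0, i1, Fin.ext_iff]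
  set a : ℝ := Real.sqrt (1 / 2) with ha
  have ha2 : a ^ 2 = 1 / 2 := Real.sq_sqrt (by norm_num)
  set w0 : Fin n → ℝ := fun i => if i = i0 then a else if i = i1 then -a else 0 with hw0
  have hw0sub : ∀ f : (Fin n) → ℝ, (∀ i, i ≠ i0 → i ≠ i1 → f i = 0) →
      ∑ i, f i = f i0 + f i1 := by
    intro f hf
    rw [← Finset.sum_pair hi01]
    symm
    apply Finset.sum_subset (Finset.subset_univ _)
    intro x _ hx
    simp only [Finset.mem_insert, Finset.mem_singleton, not_or] at hx
    exact hf x hx.1 hx.2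
  have hSne : S.Nonempty := by
    refine ⟨w0, ?_, ?_⟩
    · rw [hw0sub _ (fun i h1 h2 => by simp [hw0, h1, h2])]
      simp [hw0, hi01, hi01.symm]
      nlinarith [ha2]
    · rw [hw0sub _ (fun i h1 h2 => by simp [hw0, h1, h2])]
      simp [hw0, hi01, hi01.symm]
  obtain ⟨ws, hwsS, hmin⟩ := hcpt.exists_isMinOn hSne hQc.continuousOn
  have hws0 : ws ≠ 0 := by
    intro h
    rw [h] at hwsS
    simp [hS] at hwsS
  refine ⟨Q ws, hLpos ws hws0 hwsS.2, ?_⟩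
  intro w hw
  by_cases hw0' : w = 0
  · subst hw0'
    simp [hQ]
  · have hex : ∃ i, w i ≠ 0 := by
      by_contra h
      push_neg at h
      exact hw0' (funext h)
    obtain ⟨i, hi⟩ := hex
    set s : ℝ := ∑ i, w i ^ 2 with hs
    have hspos : 0 < s := by
      have : 0 < w i ^ 2 := by positivity
      calc (0:ℝ) < w i ^ 2 := this
        _ ≤ s := Finset.single_le_sum (fun j _ => sq_nonneg (w j)) (Finset.mem_univ i)
    set r : ℝ := Real.sqrt s with hr
    have hrpos : 0 < r := Real.sqrt_pos.2 hspos
    have hr2 : r ^ 2 = s := Real.sq_sqrt hspos.le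
    set u : Fin n → ℝ := r⁻¹ • w with hu
    have huS : u ∈ S := by
      constructor
      · have : ∑ i, u i ^ 2 = r⁻¹ ^ 2 * s := by
          rw [hs, Finset.mul_sum]
          apply Finset.sum_congr rfl
          intro j _
          simp [hu]
          ring
        rw [this, ← hr2]
        field_simp
      · have : ∑ i, u i = r⁻¹ * ∑ i, w i := by
          rw [Finset.mul_sum]
          apply Finset.sum_congr rfl
          intro j _
          simp [hu]
        rw [this, hw, mul_zero]
    have hQu : Q ws ≤ Q u := hmin huS
    have hQscale : Q u = r⁻¹ ^ 2 * Q w := by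
      simp only [hQ, hu]
      rw [Matrix.mulVec_smul, smul_dotProduct, dotProduct_smul]
      simp [smul_eq_mul]
      ring
    rw [hQscale] at hQu
    have : Q ws * s ≤ Q w := by
      have hrr : r⁻¹ ^ 2 = s⁻¹ := by
        rw [← hr2]; simp [inv_pow]
      rw [hrr] at hQu
      calc Q ws * s ≤ s⁻¹ * Q w * s := by nlinarith
        _ = Q w := by field_simp
    linarith [this]

/-- **Global attractivity of the average-consensus point (Theorem 1).**
Every solution `x : [t₀, ∞) → ℝⁿ` of the masked system
`ẋ = -L (I + Φ e^{-Σ t}) (x + e^{-Δ t} γ)` with `x(t₀) = x₀`, where `L` is an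
irreducible weight-balanced Laplacian (`L𝟙 = Lᵀ𝟙 = 0`, `wᵀ(L+Lᵀ)w > 0` for
nonzero `w ⊥ 𝟙`) and `φᵢ, σᵢ, δᵢ > 0`, converges to the average-consensus point
`η 𝟙` with `η = 𝟙ᵀ x₀ / n`. -/

theorem masked_consensus_global_attractor
    (n : ℕ) (hn : 2 ≤ n) (L : Matrix (Fin n) (Fin n) ℝ) (φ σ δ γ : Fin n → ℝ)
    (hL1 : L.mulVec (fun _ => (1 : ℝ)) = 0)
    (hLT1 : L.transpose.mulVec (fun _ => (1 : ℝ)) = 0)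
    (hLpos : ∀ w : Fin n → ℝ, w ≠ 0 → (∑ i, w i) = 0 →
      0 < dotProduct w ((L + L.transpose).mulVec w))
    (hφ : ∀ i, 0 < φ i) (hσ : ∀ i, 0 < σ i) (hδ : ∀ i, 0 < δ i)
    (t₀ : ℝ) (ht₀ : 0 ≤ t₀) (x₀ : Fin n → ℝ) (x : ℝ → Fin n → ℝ)
    (hinit : x t₀ = x₀)
    (hsol : ∀ t ∈ Set.Ici t₀, HasDerivAt x (maskedConsensusRHS L φ σ δ γ t (x t)) t) :
    Filter.Tendsto x Filter.atTop (nhds (fun _ => (∑ i, x₀ i) / n)) := by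
  obtain ⟨lam, hlam, hgap⟩ := mc_spectral_gap n hn L hLpos
  have hnR : (0:ℝ) < (n:ℝ) := by
    have : 0 < n := by omega
    exact_mod_cast this
  set η : ℝ := (∑ i, x₀ i) / n with hη
  -- the columns of L sum to zero, hence mulVec values sum to zero
  have hsumL : ∀ v : Fin n → ℝ, ∑ i, L.mulVec v i = 0 := by
    intro v
    have h1 : ∑ i, L.mulVec v i = dotProduct (fun _ => (1:ℝ)) (L.mulVec v) := by
      simp [dotProduct]
    rw [h1, Matrix.dotProduct_mulVec, ← Matrix.transpose_transpose L,
      Matrix.vecMul_transpose, hLT1]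
    simp [dotProduct]
  set F : ℝ → Fin n → ℝ := fun t => maskedConsensusRHS L φ σ δ γ t (x t) with hF
  have hcomp : ∀ t ∈ Set.Ici t₀, ∀ i, HasDerivAt (fun u => x u i) (F t i) t :=
    fun t ht i => hasDerivAt_pi.1 (hsol t ht) i
  have hFsum : ∀ t, ∑ i, F t i = 0 := by
    intro t
    simp only [hF, maskedConsensusRHS, Pi.neg_apply]
    rw [Finset.sum_neg_distrib, hsumL, neg_zero]
  -- conservation of the sum
  have hcons : ∀ t ∈ Set.Ici t₀, ∑ i, x t i = ∑ i, x₀ i := by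
    intro t ht
    have h := constant_of_has_deriv_right_zero (f := fun u => ∑ i, x u i) (a := t₀) (b := t)
      (fun u hu => (HasDerivAt.fun_sum
        (fun i _ => hcomp u hu.1 i)).continuousAt.continuousWithinAt)
      (fun u hu => by
        have hd : HasDerivAt (fun u => ∑ i, x u i) (∑ i, F u i) u :=
          HasDerivAt.fun_sum (fun i _ => hcomp u hu.1 i)
        rw [hFsum u] at hd
        exact hd.hasDerivWithinAt)
    simpa [hinit] using h t ⟨ht, le_refl t⟩
  have hysum : ∀ t ∈ Set.Ici t₀, ∑ i, (x t i - η) = 0 := by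
    intro t ht
    rw [Finset.sum_sub_distrib, hcons t ht]
    simp [hη]
    field_simp
    ring
  set V : ℝ → ℝ := fun t => ∑ i, (x t i - η)^2 with hV
  set D : ℝ → ℝ := fun t => ∑ i, 2 * (x t i - η) * F t i with hD
  have hVd : ∀ t ∈ Set.Ici t₀, HasDerivAt V (D t) t := by
    intro t ht
    have h : HasDerivAt V (∑ i, ↑(2:ℕ) * (x t i - η)^(2-1) * F t i) t :=
      HasDerivAt.fun_sum (fun i _ => ((hcomp t ht i).sub_const η).pow 2)
    convert h using 1
    apply Finset.sum_congr rfl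
    intro i _
    push_cast
    ring
  have hV0 : ∀ t, 0 ≤ V t := fun t => Finset.sum_nonneg fun i _ => sq_nonneg _
  have hyV : ∀ t i, (x t i - η)^2 ≤ V t := fun t i =>
    Finset.single_le_sum (f := fun j => (x t j - η)^2) (fun j _ => sq_nonneg _)
      (Finset.mem_univ i)
  -- constants
  have hFinNe : (Finset.univ : Finset (Fin n)).Nonempty := ⟨⟨0, by omega⟩, Finset.mem_univ _⟩
  set c : ℝ := Finset.univ.inf' hFinNe (fun j => min (σ j) (δ j)) with hc
  have hcpos : 0 < c := (Finset.lt_inf'_iff hFinNe).2 fun j _ => lt_min (hσ j) (hδ j)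
  have hcσ : ∀ j, c ≤ σ j := fun j =>
    (Finset.inf'_le _ (Finset.mem_univ j)).trans (min_le_left _ _)
  have hcδ : ∀ j, c ≤ δ j := fun j =>
    (Finset.inf'_le _ (Finset.mem_univ j)).trans (min_le_right _ _)
  set B : ℝ := ∑ i, ∑ j, |L i j| with hB
  have hB0 : 0 ≤ B := Finset.sum_nonneg fun i _ => Finset.sum_nonneg fun j _ => abs_nonneg _
  set P : ℝ := ∑ j, φ j with hP
  have hP0 : 0 ≤ P := Finset.sum_nonneg fun j _ => (hφ j).le
  have hPj : ∀ j, φ j ≤ P := fun j =>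
    Finset.single_le_sum (fun k _ => (hφ k).le) (Finset.mem_univ j)
  set G : ℝ := ∑ j, ((1 + φ j) * |γ j| + φ j * |η|) with hG
  have hGterm : ∀ j, 0 ≤ (1 + φ j) * |γ j| + φ j * |η| := by
    intro j
    have := hφ j
    positivity
  have hG0 : 0 ≤ G := Finset.sum_nonneg fun j _ => hGterm j
  have hGj : ∀ j, (1 + φ j) * |γ j| + φ j * |η| ≤ G := fun j =>
    Finset.single_le_sum (fun k _ => hGterm k) (Finset.mem_univ j)
  set A : ℝ := 2 * B * (P + G) with hA
  have hA0 : 0 ≤ A := by positivity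
  -- the key differential inequality
  have hDle : ∀ t ∈ Set.Ici t₀, D t ≤ -lam * V t + A * Real.exp (-c * t) * (V t + 1) := by
    intro t ht
    have htpos : 0 ≤ t := le_trans ht₀ ht
    set y : Fin n → ℝ := fun i => x t i - η with hy
    set p : Fin n → ℝ := fun j => φ j * Real.exp (-σ j * t) with hp
    set q : Fin n → ℝ := fun j => Real.exp (-δ j * t) with hq
    set m : Fin n → ℝ := fun j => (1 + p j) * (x t j + q j * γ j) with hm
    set r : Fin n → ℝ := fun j => p j * y j + (1 + p j) * q j * γ j + p j * η with hr
    have hFt : F t = -(L.mulVec m) := rfl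
    have hmdec : m = (y + (fun _ => η) + r) := by
      funext j
      simp only [hm, hy, hr, Pi.add_apply]
      ring
    have hLconst : L.mulVec (fun _ => η) = 0 := by
      have h2 : (fun _ : Fin n => η) = η • (fun _ : Fin n => (1:ℝ)) := by
        funext j; simp
      rw [h2, Matrix.mulVec_smul, hL1, smul_zero]
    have hLm : L.mulVec m = L.mulVec y + L.mulVec r := by
      rw [hmdec, Matrix.mulVec_add, Matrix.mulVec_add, hLconst, add_zero]
    have hsym : dotProduct y (L.transpose.mulVec y)
        = dotProduct y (L.mulVec y) := by
      rw [Matrix.dotProduct_mulVec, Matrix.vecMul_transpose, dotProduct_comm]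
    have hDt : D t = -(dotProduct y ((L + L.transpose).mulVec y))
        - 2 * dotProduct y (L.mulVec r) := by
      have h1 : D t = -2 * dotProduct y (L.mulVec m) := by
        rw [hD]
        simp only [hFt, Pi.neg_apply]
        rw [dotProduct, Finset.mul_sum]
        apply Finset.sum_congr rfl
        intro i _
        simp only [hy]
        ring
      rw [h1, hLm, dotProduct_add, Matrix.add_mulVec, dotProduct_add, hsym]
      ring
    have hVy : ∑ i, y i ^ 2 = V t := rfl
    have hgapt : lam * V t ≤ dotProduct y ((L + L.transpose).mulVec y) := by
      rw [← hVy]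
      exact hgap y (hysum t ht)
    -- bounds on r
    have hp0 : ∀ j, 0 ≤ p j := fun j => by
      have := (hφ j).le
      positivity
    have hpb : ∀ j, p j ≤ P * Real.exp (-c * t) := by
      intro j
      have he : Real.exp (-σ j * t) ≤ Real.exp (-c * t) :=
        Real.exp_le_exp.2 (by nlinarith [hcσ j])
      calc p j = φ j * Real.exp (-σ j * t) := rfl
        _ ≤ P * Real.exp (-c * t) := by
            apply mul_le_mul (hPj j) he (Real.exp_pos _).le hP0
    have hpφ : ∀ j, p j ≤ φ j := by
      intro j
      have he : Real.exp (-σ j * t) ≤ 1 := Real.exp_le_one_iff.2 (by nlinarith [(hσ j).le])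
      calc p j = φ j * Real.exp (-σ j * t) := rfl
        _ ≤ φ j * 1 := by nlinarith [(hφ j).le]
        _ = φ j := mul_one _
    have hqb : ∀ j, q j ≤ Real.exp (-c * t) :=
      fun j => Real.exp_le_exp.2 (by nlinarith [hcδ j])
    have hq0 : ∀ j, 0 < q j := fun j => Real.exp_pos _
    have hrb : ∀ j, |r j| ≤ Real.exp (-c * t) * (P * |y j| + G) := by
      intro j
      have h1 : |r j| ≤ |p j * y j| + |(1 + p j) * q j * γ j| + |p j * η| :=
        (abs_add_le _ _).trans (add_le_add_left (abs_add_le _ _) _)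
      have h2 : |p j * y j| ≤ Real.exp (-c * t) * (P * |y j|) := by
        rw [abs_mul, abs_of_nonneg (hp0 j)]
        have := hpb j
        nlinarith [abs_nonneg (y j)]
      have h3 : |(1 + p j) * q j * γ j| ≤ Real.exp (-c * t) * ((1 + φ j) * |γ j|) := by
        rw [abs_mul, abs_mul, abs_of_nonneg (by linarith [hp0 j] : (0:ℝ) ≤ 1 + p j),
          abs_of_pos (hq0 j)]
        have key : (1 + p j) * q j ≤ (1 + φ j) * Real.exp (-c * t) := by
          nlinarith [mul_le_mul_of_nonneg_left (hqb j)
              (by linarith [hp0 j] : (0:ℝ) ≤ 1 + p j),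
            mul_le_mul_of_nonneg_right (hpφ j) (Real.exp_pos (-c*t)).le]
        calc (1 + p j) * q j * |γ j| ≤ ((1 + φ j) * Real.exp (-c * t)) * |γ j| :=
              mul_le_mul_of_nonneg_right key (abs_nonneg _)
          _ = Real.exp (-c * t) * ((1 + φ j) * |γ j|) := by ring
      have h4 : |p j * η| ≤ Real.exp (-c * t) * (φ j * |η|) := by
        rw [abs_mul, abs_of_nonneg (hp0 j)]
        have hpb2 : p j ≤ φ j * Real.exp (-c * t) := by
          have he : Real.exp (-σ j * t) ≤ Real.exp (-c * t) :=
            Real.exp_le_exp.2 (by nlinarith [hcσ j])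
          calc p j = φ j * Real.exp (-σ j * t) := rfl
            _ ≤ φ j * Real.exp (-c * t) := by nlinarith [(hφ j).le]
        nlinarith [abs_nonneg η]
      calc |r j| ≤ |p j * y j| + |(1 + p j) * q j * γ j| + |p j * η| := h1
        _ ≤ Real.exp (-c * t) * (P * |y j| + ((1 + φ j) * |γ j| + φ j * |η|)) := by
            have := h2; have := h3; have := h4; nlinarith []
        _ ≤ Real.exp (-c * t) * (P * |y j| + G) := by
            have := hGj j
            nlinarith [(Real.exp_pos (-c*t)).le]
    -- bound the cross term
    have hyy : ∀ i j, |y i| * |y j| ≤ V t + 1 := by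
      intro i j
      have h1 : y i ^ 2 ≤ V t := hyV t i
      have h2 : y j ^ 2 ≤ V t := hyV t j
      nlinarith [sq_nonneg (|y i| - |y j|), sq_abs (y i), sq_abs (y j), hV0 t]
    have hy1 : ∀ i, |y i| ≤ V t + 1 := by
      intro i
      have h1 : y i ^ 2 ≤ V t := hyV t i
      nlinarith [sq_nonneg (|y i| - 1), sq_abs (y i)]
    have hcross : ∀ i j, |y i| * |r j| ≤ Real.exp (-c * t) * ((P + G) * (V t + 1)) := by
      intro i j
      have h1 : |y i| * |r j| ≤ |y i| * (Real.exp (-c * t) * (P * |y j| + G)) := by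
        apply mul_le_mul_of_nonneg_left (hrb j) (abs_nonneg _)
      have h2 : |y i| * (Real.exp (-c * t) * (P * |y j| + G))
          = Real.exp (-c * t) * (P * (|y i| * |y j|) + G * |y i|) := by ring
      have h3 : P * (|y i| * |y j|) + G * |y i| ≤ (P + G) * (V t + 1) := by
        have := hyy i j
        have := hy1 i
        nlinarith [abs_nonneg (y i), abs_nonneg (y j)]
      calc |y i| * |r j| ≤ Real.exp (-c * t) * (P * (|y i| * |y j|) + G * |y i|) := by
            rw [← h2]; exact h1
        _ ≤ Real.exp (-c * t) * ((P + G) * (V t + 1)) := by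
            nlinarith [(Real.exp_pos (-c*t)).le]
    have hdot : |dotProduct y (L.mulVec r)|
        ≤ B * (Real.exp (-c * t) * ((P + G) * (V t + 1))) := by
      have h1 : |dotProduct y (L.mulVec r)|
          ≤ ∑ i, ∑ j, |L i j| * (|y i| * |r j|) := by
        rw [dotProduct]
        refine (Finset.abs_sum_le_sum_abs _ _).trans ?_
        apply Finset.sum_le_sum
        intro i _
        rw [Matrix.mulVec, dotProduct, abs_mul]
        calc |y i| * |∑ j, L i j * r j| ≤ |y i| * ∑ j, |L i j * r j| := by
              apply mul_le_mul_of_nonneg_left (Finset.abs_sum_le_sum_abs _ _) (abs_nonneg _)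
          _ = ∑ j, |y i| * |L i j * r j| := Finset.mul_sum _ _ _
          _ = ∑ j, |L i j| * (|y i| * |r j|) := by
              apply Finset.sum_congr rfl
              intro j _
              rw [abs_mul]
              ring
      have h2 : ∑ i, ∑ j, |L i j| * (|y i| * |r j|)
          ≤ ∑ i, ∑ j, |L i j| * (Real.exp (-c * t) * ((P + G) * (V t + 1))) := by
        apply Finset.sum_le_sum
        intro i _
        apply Finset.sum_le_sum
        intro j _
        exact mul_le_mul_of_nonneg_left (hcross i j) (abs_nonneg _)
      have h3 : ∑ i, ∑ j, |L i j| * (Real.exp (-c * t) * ((P + G) * (V t + 1)))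
          = B * (Real.exp (-c * t) * ((P + G) * (V t + 1))) := by
        rw [hB, Finset.sum_mul]
        apply Finset.sum_congr rfl
        intro i _
        rw [Finset.sum_mul]
      linarith [h1.trans h2]
    rw [hDt]
    have hfin : -2 * dotProduct y (L.mulVec r)
        ≤ A * Real.exp (-c * t) * (V t + 1) := by
      have := neg_abs_le (dotProduct y (L.mulVec r))
      have := hdot
      rw [hA]
      nlinarith [abs_nonneg (dotProduct y (L.mulVec r))]
    linarith [hgapt, hfin]
  clear_value F V D c B P G A η
  -- Grönwall estimate
  have key : ∀ T, t₀ ≤ T → A * Real.exp (-c * T) ≤ lam / 2 → ∀ t, T ≤ t →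
      V t ≤ V T * Real.exp (-(lam/2) * (t - T)) + (A * Real.exp (-c * T)) / (lam / 2) := by
    intro T hT hAe t htT
    set ε : ℝ := A * Real.exp (-c * T) with hε
    have hε0 : 0 ≤ ε := mul_nonneg hA0 (Real.exp_pos _).le
    have hcont : ContinuousOn V (Icc T t) :=
      fun u hu => ((hVd u (le_trans hT hu.1)).continuousAt).continuousWithinAt
    have hslope : ∀ u ∈ Ico T t, ∀ r, D u < r →
        ∃ᶠ z in nhdsWithin u (Ioi u), (z - u)⁻¹ * (V z - V u) < r :=
      fun u hu r hr =>
        ((hVd u (le_trans hT hu.1)).hasDerivWithinAt).liminf_right_slope_le hr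
    have hbound : ∀ u ∈ Ico T t, D u ≤ -(lam/2) * V u + ε := by
      intro u hu
      have h1 := hDle u (le_trans hT hu.1)
      have h6' : c * T ≤ c * u := mul_le_mul_of_nonneg_left hu.1 hcpos.le
      have h6 : Real.exp (-c * u) ≤ Real.exp (-c * T) :=
        Real.exp_le_exp.2 (by linarith)
      have h2 : A * Real.exp (-c * u) ≤ ε := by
        rw [hε]
        exact mul_le_mul_of_nonneg_left h6 hA0
      have h7 : A * Real.exp (-c * u) ≤ lam / 2 := le_trans h2 hAe
      have h8 : A * Real.exp (-c * u) * V u ≤ (lam / 2) * V u :=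
        mul_le_mul_of_nonneg_right h7 (hV0 u)
      linarith [h1, h2, h8, hV0 u, hlam]
    have hgb := le_gronwallBound_of_liminf_deriv_right_le (f := V) (f' := D)
      (δ := V T) (K := -(lam/2)) (ε := ε) (a := T) (b := t)
      hcont hslope le_rfl hbound
    have h3 := hgb t ⟨htT, le_rfl⟩
    rw [gronwallBound_of_K_ne_0 (show -(lam/2) ≠ 0 by intro h; linarith [hlam])] at h3
    have hKx : -(lam/2) * (t - T) ≤ 0 := by nlinarith [hlam]
    have he1 : Real.exp (-(lam/2) * (t - T)) ≤ 1 := Real.exp_le_one_iff.2 hKx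
    have he0 : 0 < Real.exp (-(lam/2) * (t - T)) := Real.exp_pos _
    have h4 : ε / (-(lam/2)) * (Real.exp (-(lam/2) * (t - T)) - 1) ≤ ε / (lam/2) := by
      have h5 : ε / (-(lam/2)) = -(ε / (lam/2)) := by ring
      rw [h5]
      have h6 : 0 ≤ ε / (lam/2) := div_nonneg hε0 (by linarith)
      nlinarith
    linarith [h3, h4]
  have hexp_tendsto : Tendsto (fun T : ℝ => A * Real.exp (-c * T)) atTop (𝓝 0) := by
    have h1 : Tendsto (fun T : ℝ => -c * T) atTop atBot :=
      tendsto_id.const_mul_atTop_of_neg (by linarith [hcpos])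
    have h2 := Real.tendsto_exp_atBot.comp h1
    have h3 := h2.const_mul A
    simpa using h3
  have hVto0 : Tendsto V atTop (𝓝 0) := by
    rw [Metric.tendsto_atTop]
    intro ε hε
    have hmin : 0 < min (lam/2) (lam/2 * (ε/4)) :=
      lt_min (by linarith) (by nlinarith)
    have h1 : ∀ᶠ T in atTop, A * Real.exp (-c * T) < min (lam/2) (lam/2 * (ε/4)) :=
      hexp_tendsto.eventually (gt_mem_nhds hmin)
    obtain ⟨T, hT1, hT2⟩ := (h1.and (eventually_ge_atTop t₀)).exists
    have hkey := key T hT2 (le_of_lt (lt_of_lt_of_le hT1 (min_le_left _ _)))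
    have hε2 : (A * Real.exp (-c * T)) / (lam/2) ≤ ε/2 := by
      have h2 : A * Real.exp (-c * T) ≤ lam/2 * (ε/4) :=
        le_of_lt (lt_of_lt_of_le hT1 (min_le_right _ _))
      rw [div_le_iff₀ (by linarith)]
      nlinarith
    have h2 : Tendsto (fun t : ℝ => V T * Real.exp (-(lam/2) * (t - T))) atTop (𝓝 0) := by
      have h3 : Tendsto (fun t : ℝ => -(lam/2) * (t - T)) atTop atBot :=
        (tendsto_atTop_add_const_right atTop (-T) tendsto_id).const_mul_atTop_of_neg
          (by linarith [hlam])
      have h4 := (Real.tendsto_exp_atBot.comp h3).const_mul (V T)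
      simpa [sub_eq_add_neg] using h4
    have h4 : ∀ᶠ t in atTop, V T * Real.exp (-(lam/2) * (t - T)) < ε/4 :=
      h2.eventually (gt_mem_nhds (by linarith))
    obtain ⟨N, hN⟩ := eventually_atTop.1 (h4.and (eventually_ge_atTop T))
    refine ⟨N, fun t ht => ?_⟩
    obtain ⟨hNa, hNb⟩ := hN t ht
    have h5 := hkey t hNb
    rw [Real.dist_eq, sub_zero, abs_of_nonneg (hV0 t)]
    linarith
  rw [tendsto_pi_nhds]
  intro i
  have h1 : Tendsto (fun t => (x t i - η)^2) atTop (𝓝 0) :=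
    squeeze_zero (fun t => sq_nonneg _) (fun t => hyV t i) hVto0
  have h2 : Tendsto (fun t => |x t i - η|) atTop (𝓝 0) := by
    have h3 := (Real.continuous_sqrt.tendsto 0).comp h1
    simpa [Function.comp_def, Real.sqrt_sq_eq_abs] using h3
  have h3 : Tendsto (fun t => x t i - η) atTop (𝓝 0) :=
    (tendsto_zero_iff_abs_tendsto_zero _).2 h2
  have h4 := h3.add_const η
  simpa using h4
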